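/- Let G⃗ be a rooted extraction order of a request graph. The confluence edge label assignment of G⃗ is a decomposable edge label assignment: it extends itself trivially, each label node's label-induced subgraph is connected and rooted, each label node lies in its own label-induced subgraph, all in-edges of a node have equal label sets, and no out-edge of a node k is labeled with k. -/

import Mathlib

/-- A directed path in the digraph `A` from `i` to `j`, given as its list of vertices. -/
def DiPath {V : Type*} (A : V → V → Prop) (i j : V) (l : List V) : Prop :=
  List.Chain' A l ∧ l.head? = some i ∧ l.getLast? = some j ∧ l.Nodup ∧ 2 ≤ l.length

/-- A confluence from `i` to `j`: a pair of distinct directed paths from `i` to `j`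
that are node-disjoint except for their shared start and end nodes. -/
def IsConfluence {V : Type*} (A : V → V → Prop) (i j : V) (l₁ l₂ : List V) : Prop :=
  DiPath A i j l₁ ∧ DiPath A i j l₂ ∧ l₁ ≠ l₂ ∧
  ∀ v ∈ l₁, v ∈ l₂ → v = i ∨ v = j

/-- The confluence edge label assignment: the edge `e` is labeled with `j` iff `e`
lies on some confluence ending in `j`. -/
def ConfLabel {V : Type*} (A : V → V → Prop) (e : V × V) (j : V) : Prop :=
  ∃ i l₁ l₂, IsConfluence A i j l₁ l₂ ∧ (e ∈ l₁.zip l₁.tail ∨ e ∈ l₂.zip l₂.tail)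

/-- The confluence label set of an edge. -/
def ConfSet {V : Type*} (A : V → V → Prop) (e : V × V) : Set V :=
  {j | ConfLabel A e j}

/-- The digraph `A` is acyclic. -/
def Acyclic {V : Type*} (A : V → V → Prop) : Prop :=
  ∀ v, ¬ Relation.TransGen A v v

/-- Every node of the digraph `A` is reachable from the root `r`. -/
def RootedAt {V : Type*} (A : V → V → Prop) (r : V) : Prop :=
  ∀ v, Relation.ReflTransGen A r v

/-- The nodes of the label-induced subgraph for the label `k`: endpoints of edges
labeled with `k`. -/
def LabelNodes {V : Type*} (A : V → V → Prop) (L : V × V → Set V) (k : V) : Set V :=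
  {v | ∃ w, (A v w ∧ k ∈ L (v, w)) ∨ (A w v ∧ k ∈ L (w, v))}

/-- A decomposable edge label assignment `L` for the digraph `A`:
it extends the confluence edge labels, every label-induced subgraph is connected and
rooted, every label node lies in its own label-induced subgraph, all in-edges of a
node carry the same label set, and no out-edge of `k` is labeled with `k`. -/
structure DecomposableLabels {V : Type*} (A : V → V → Prop) (L : V × V → Set V) :
    Prop where
  extends_confluence : ∀ (e : V × V) (j : V), ConfLabel A e j → j ∈ L e
  rooted_label_subgraph : ∀ k : V, (∃ v w, A v w ∧ k ∈ L (v, w)) →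
    ∃ ρ ∈ LabelNodes A L k, ∀ v ∈ LabelNodes A L k,
      Relation.ReflTransGen (fun x y => A x y ∧ k ∈ L (x, y)) ρ v
  mem_own_subgraph : ∀ k : V, (∃ v w, A v w ∧ k ∈ L (v, w)) → k ∈ LabelNodes A L k
  in_edges_eq : ∀ i k k' : V, A k i → A k' i → L (k, i) = L (k', i)
  not_self_labeled : ∀ k w : V, A k w → k ∉ L (k, w)

namespace Stmt13X
open List Relation

variable {V : Type*} {A B : V → V → Prop} {l : List V}

lemma getElem_inj (hn : l.Nodup) {i j : ℕ} (hi : i < l.length) (hj : j < l.length)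
    (h : l[i] = l[j]) : i = j := by
  have := List.nodup_iff_injective_getElem.1 hn (a₁ := ⟨i, hi⟩) (a₂ := ⟨j, hj⟩) h
  exact congrArg Fin.val this

lemma chain'_rel (hc : List.Chain' A l) {i : ℕ} (h : i + 1 < l.length) :
    A (l[i]'(by omega)) (l[i+1]'h) := by
  have := List.isChain_iff_getElem.1 hc i h
  simpa [List.get_eq_getElem] using this

lemma chain'_transGen (hc : List.Chain' A l) {i j : ℕ} (hij : i < j) (hj : j < l.length) :
    Relation.TransGen A (l[i]'(by omega)) (l[j]'hj) := by
  induction j with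
  | zero => omega
  | succ m ih =>
    rcases Nat.lt_succ_iff_lt_or_eq.1 hij with h | h
    · exact (ih h (by omega)).tail (chain'_rel hc hj)
    · subst h; exact .single (chain'_rel hc hj)

lemma chain'_reflTransGen (hc : List.Chain' A l) {i j : ℕ} (hij : i ≤ j) (hj : j < l.length) :
    Relation.ReflTransGen A (l[i]'(by omega)) (l[j]'hj) := by
  rcases Nat.lt_or_ge i j with h | h
  · exact (chain'_transGen hc h hj).to_reflTransGen
  · obtain rfl : i = j := by omega
    rfl

lemma chain'_nodup (hac : Acyclic A) (hc : List.Chain' A l) : l.Nodup := by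
  rw [List.nodup_iff_injective_getElem]
  rintro ⟨i, hi⟩ ⟨j, hj⟩ h
  simp only at h
  rcases lt_trichotomy i j with hlt | heq | hgt
  · exact absurd (h ▸ chain'_transGen hc hlt hj) (hac _)
  · exact Fin.ext heq
  · exact absurd (h.symm ▸ chain'_transGen hc hgt hi) (hac _)

lemma mem_zip_iff {a b : V} : (a, b) ∈ l.zip l.tail ↔
    ∃ i, ∃ h : i + 1 < l.length, l[i]'(by omega) = a ∧ l[i+1]'h = b := by
  constructor
  · intro h
    obtain ⟨i, hi, hget⟩ := List.mem_iff_getElem.1 h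
    have hlen : (l.zip l.tail).length = min l.length l.tail.length := List.length_zip
    have hil : i + 1 < l.length := by
      rw [hlen, List.length_tail] at hi; omega
    refine ⟨i, hil, ?_, ?_⟩
    · have := List.getElem_zip (l := l) (l' := l.tail) (i := i) (h := hi)
      rw [this] at hget
      exact (Prod.mk.injEq _ _ _ _ ▸ hget).1
    · have := List.getElem_zip (l := l) (l' := l.tail) (i := i) (h := hi)
      rw [this] at hget
      have h2 := (Prod.mk.injEq _ _ _ _ ▸ hget).2
      rwa [List.getElem_tail] at h2
  · rintro ⟨i, h, rfl, rfl⟩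
    refine List.mem_iff_getElem.2 ⟨i, ?_, ?_⟩
    · rw [List.length_zip, List.length_tail]; omega
    · rw [List.getElem_zip, List.getElem_tail]

end Stmt13X

namespace Stmt13X
open List Relation

variable {V : Type*} {A : V → V → Prop} {a b c d x : V} {l l₁ l₂ : List V}

/-- A (possibly trivial) walk from `a` to `b` along `l`. -/
def Wk (A : V → V → Prop) (a b : V) (l : List V) : Prop :=
  List.Chain' A l ∧ l.head? = some a ∧ l.getLast? = some b

lemma Wk.ne_nil (h : Wk A a b l) : l ≠ [] := by
  rintro rfl; simp [Wk] at h

lemma Wk.length_pos (h : Wk A a b l) : 0 < l.length :=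
  List.length_pos_iff.2 h.ne_nil

lemma Wk.chain' (h : Wk A a b l) : List.Chain' A l := h.1

lemma Wk.get0 (h : Wk A a b l) : l[0]'h.length_pos = a := by
  have h2 := h.2.1
  rw [List.head?_eq_head h.ne_nil, List.head_eq_getElem] at h2
  exact (Option.some.injEq _ _ ▸ h2)

lemma Wk.getLastElem (h : Wk A a b l) : l[l.length - 1]'(by have := h.length_pos; omega) = b := by
  have h2 := h.2.2
  rw [List.getLast?_eq_getLast h.ne_nil, List.getLast_eq_getElem] at h2
  exact (Option.some.injEq _ _ ▸ h2)

lemma Wk.mk' (hc : List.Chain' A l) (h0 : 0 < l.length) :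
    Wk A (l[0]) (l[l.length - 1]'(by omega)) l := by
  have hne : l ≠ [] := List.ne_nil_of_length_pos h0
  refine ⟨hc, ?_, ?_⟩
  · rw [List.head?_eq_head hne, List.head_eq_getElem]
  · rw [List.getLast?_eq_getLast hne, List.getLast_eq_getElem]

lemma Wk.eq_of_singleton (h : Wk A a b l) (hl : l.length = 1) : a = b := by
  have h0 := h.get0
  have h1 := h.getLastElem
  simp only [hl] at h1
  exact h0.symm.trans h1

lemma Wk.drop (h : Wk A a b l) {n : ℕ} (hn : n < l.length) :
    Wk A (l[n]) b (l.drop n) := by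
  have hlen : (l.drop n).length = l.length - n := List.length_drop
  have h0 : 0 < (l.drop n).length := by omega
  have := Wk.mk' (h.chain'.drop n) h0
  have e1 : (l.drop n)[0]'h0 = l[n] := by rw [List.getElem_drop]; congr 1
  have e2 : (l.drop n)[(l.drop n).length - 1]'(by omega) = b := by
    rw [List.getElem_drop]
    have hg := h.getLastElem
    convert hg using 2
    omega
  rw [e1, e2] at this
  exact this

lemma Wk.take (h : Wk A a b l) {n : ℕ} (hn : n < l.length) :
    Wk A a (l[n]) (l.take (n+1)) := by
  have hlen : (l.take (n+1)).length = n + 1 := by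
    rw [List.length_take]; omega
  have h0 : 0 < (l.take (n+1)).length := by omega
  have := Wk.mk' (h.chain'.take (n+1)) h0
  have e1 : (l.take (n+1))[0]'h0 = a := by
    rw [List.getElem_take]; exact h.get0
  have e2 : (l.take (n+1))[(l.take (n+1)).length - 1]'(by omega) = l[n] := by
    rw [List.getElem_take]
    congr 1; omega
  rw [e1, e2] at this
  exact this

lemma Wk.cat (h1 : Wk A a b l₁) (hbc : A b c) (h2 : Wk A c d l₂) :
    Wk A a d (l₁ ++ l₂) := by
  refine ⟨List.IsChain.append h1.chain' h2.chain' ?_, ?_, ?_⟩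
  · intro x hx y hy
    rw [h1.2.2, Option.mem_some_iff] at hx
    rw [h2.2.1, Option.mem_some_iff] at hy
    subst hx; subst hy; exact hbc
  · rw [List.head?_append_of_ne_nil _ h1.ne_nil]; exact h1.2.1
  · rw [List.getLast?_append_of_ne_nil _ h2.ne_nil]; exact h2.2.2

lemma Wk.trans (h1 : Wk A a b l₁) (h2 : Wk A b c l₂) : Wk A a c (l₁ ++ l₂.tail) := by
  rcases Nat.lt_or_ge 1 l₂.length with hlen | hlen
  · have htl : l₂.tail = l₂.drop 1 := List.drop_one.symm
    have hd : Wk A (l₂[1]) c (l₂.drop 1) := h2.drop hlen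
    have hrel : A b (l₂[1]) := by
      have := chain'_rel h2.chain' (i := 0) hlen
      rwa [h2.get0] at this
    rw [htl]
    exact h1.cat hrel hd
  · have h1len : l₂.length = 1 := by have := h2.length_pos; omega
    have : l₂.tail = [] := by
      rw [← List.length_eq_zero_iff, List.length_tail]; omega
    rw [this, List.append_nil]
    have : b = c := h2.eq_of_singleton h1len
    exact this ▸ h1

lemma Wk.mem_getElem (h : Wk A a b l) (hx : x ∈ l) :
    ∃ i, ∃ hi : i < l.length, l[i] = x := by
  obtain ⟨i, hi, he⟩ := List.mem_iff_getElem.1 hx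
  exact ⟨i, hi, he⟩

lemma Wk.reflTransGen_to_mem (h : Wk A a b l) (hx : x ∈ l) : Relation.ReflTransGen A a x := by
  obtain ⟨i, hi, rfl⟩ := h.mem_getElem hx
  have := chain'_reflTransGen h.chain' (i := 0) (Nat.zero_le i) hi
  rwa [h.get0] at this

lemma Wk.reflTransGen_from_mem (h : Wk A a b l) (hx : x ∈ l) : Relation.ReflTransGen A x b := by
  obtain ⟨i, hi, rfl⟩ := h.mem_getElem hx
  have := chain'_reflTransGen h.chain' (i := i) (j := l.length - 1) (by omega) (by omega)
  rwa [h.getLastElem] at this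

lemma Wk.transGen_to_mem (h : Wk A a b l) {i : ℕ} (hi : i < l.length) (h0 : 0 < i) :
    Relation.TransGen A a (l[i]) := by
  have := chain'_transGen h.chain' (i := 0) h0 hi
  rwa [h.get0] at this

lemma wk_of_reflTransGen (h : Relation.ReflTransGen A a b) : ∃ l, Wk A a b l := by
  obtain ⟨l, hc, hlast⟩ := List.exists_isChain_cons_of_relationReflTransGen h
  refine ⟨a :: l, hc, rfl, ?_⟩
  rw [List.getLast?_eq_getLast (List.cons_ne_nil _ _), hlast]

lemma mem_of_zip_left {e : V × V} (h : e ∈ l.zip l.tail) : e.1 ∈ l := by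
  obtain ⟨i, hi, h1, h2⟩ := mem_zip_iff.1 (show (e.1, e.2) ∈ _ from h)
  exact h1 ▸ List.getElem_mem _
lemma mem_of_zip_right {e : V × V} (h : e ∈ l.zip l.tail) : e.2 ∈ l := by
  obtain ⟨i, hi, h1, h2⟩ := mem_zip_iff.1 (show (e.1, e.2) ∈ _ from h)
  exact h2 ▸ List.getElem_mem _

end Stmt13X

namespace Stmt13X
open List Relation

variable {V : Type*} {A : V → V → Prop} {a b : V} {l : List V}

lemma Wk.start_mem (h : Wk A a b l) : a ∈ l := h.get0 ▸ List.getElem_mem _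
lemma Wk.end_mem (h : Wk A a b l) : b ∈ l := h.getLastElem ▸ List.getElem_mem _

lemma merge (hac : Acyclic A) {W W' : List V} {rr j : V}
    (hW : Wk A rr j W) (hW' : Wk A rr j W')
    {p : ℕ} (hp : p + 1 < W.length)
    (hint : ∀ q (h : q < W.length), p < q → q + 1 < W.length → W[q] ∉ W')
    (hedge : (W[p]'(by omega), W[p+1]'hp) ∉ W'.zip W'.tail) :
    ∃ a, ∃ _ : a ≤ p, ∃ m,
      IsConfluence A (W[a]'(by omega)) j (W.drop a) m ∧
      (∀ q (hq : q < W.length), q ≤ p → W[q] ∈ W' → q ≤ a) := by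
  classical
  have hWnd : W.Nodup := chain'_nodup hac hW.chain'
  have hW'nd : W'.Nodup := chain'_nodup hac hW'.chain'
  set P : ℕ → Prop := fun q => ∃ h : q < W.length, W[q] ∈ W' with hPdef
  have hP0 : P 0 := ⟨hW.length_pos, by rw [hW.get0]; exact hW'.start_mem⟩
  set a := Nat.findGreatest P p with hadef
  have ha_le : a ≤ p := Nat.findGreatest_le p
  have haP : P a := Nat.findGreatest_spec (Nat.zero_le p) hP0
  obtain ⟨haW, haW'⟩ := haP
  have hmax : ∀ q (hq : q < W.length), q ≤ p → W[q] ∈ W' → q ≤ a := by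
    intro q hq hqp hmem
    by_contra hgt
    exact (Nat.findGreatest_is_greatest (P := P) (by omega) hqp) ⟨hq, hmem⟩
  obtain ⟨b, hb, hba⟩ := List.mem_iff_getElem.1 haW'
  have hblt : b + 1 < W'.length := by
    by_contra hbe
    have hbl : b = W'.length - 1 := by omega
    have hj : W'[b] = j := by
      rw [← hW'.getLastElem]; congr 1
    have hWaj : W[a] = W[W.length - 1]'(by omega) := by
      rw [← hba, hj, hW.getLastElem]
    have := getElem_inj hWnd haW (by omega) hWaj
    omega
  have hwk1 : Wk A (W[a]) j (W.drop a) := hW.drop haW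
  have hwk2 : Wk A (W[a]) j (W'.drop b) := hba ▸ hW'.drop hb
  have d1 : DiPath A (W[a]) j (W.drop a) :=
    ⟨hwk1.chain', hwk1.2.1, hwk1.2.2, hWnd.sublist (List.drop_sublist _ _),
      by rw [List.length_drop]; omega⟩
  have d2 : DiPath A (W[a]) j (W'.drop b) :=
    ⟨hwk2.chain', hwk2.2.1, hwk2.2.2, hW'nd.sublist (List.drop_sublist _ _),
      by rw [List.length_drop]; omega⟩
  have hedge1 : (W[p]'(by omega), W[p+1]'hp) ∈ (W.drop a).zip (W.drop a).tail := by
    refine mem_zip_iff.2 ⟨p - a, by rw [List.length_drop]; omega, ?_, ?_⟩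
    · rw [List.getElem_drop]; congr 1; omega
    · rw [List.getElem_drop]; congr 1; omega
  have hne : W.drop a ≠ W'.drop b := by
    intro he
    apply hedge
    have h2 : (W[p]'(by omega), W[p+1]'hp) ∈ (W'.drop b).zip (W'.drop b).tail := he ▸ hedge1
    obtain ⟨i, hi, h1', h2'⟩ := mem_zip_iff.1 h2
    rw [List.getElem_drop] at h1' h2'
    exact mem_zip_iff.2 ⟨b + i, by rw [List.length_drop] at hi; omega, h1', h2'⟩
  have hdisj : ∀ v ∈ W.drop a, v ∈ W'.drop b → v = W[a] ∨ v = j := by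
    intro v hv hv2
    obtain ⟨t, ht, hveq⟩ := List.mem_iff_getElem.1 hv
    rw [List.getElem_drop] at hveq
    rw [List.length_drop] at ht
    have hvW' : v ∈ W' := List.mem_of_mem_drop hv2
    rcases Nat.lt_or_ge (a + t) (p + 1) with hle | hgt
    · have := hmax (a + t) (by omega) (by omega) (hveq ▸ hvW')
      have ht0 : t = 0 := by omega
      left; rw [← hveq]; congr 1; omega
    · rcases Nat.lt_or_ge (a + t + 1) W.length with hlt2 | hge2
      · exact absurd (hveq ▸ hvW') (hint (a + t) (by omega) (by omega) hlt2)
      · right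
        rw [← hveq, ← hW.getLastElem]
        congr 1; omega
  exact ⟨a, ha_le, W'.drop b, ⟨d1, d2, hne, hdisj⟩, hmax⟩

end Stmt13X

namespace Stmt13X
open List Relation

variable {V : Type*} {A : V → V → Prop} {r u v j s : V} {l l₁ l₂ : List V}

lemma _root_.IsConfluence.symm (h : IsConfluence A s j l₁ l₂) : IsConfluence A s j l₂ l₁ :=
  ⟨h.2.1, h.1, h.2.2.1.symm, fun v hv hv2 => h.2.2.2 v hv2 hv⟩

lemma _root_.DiPath.wk (h : DiPath A s j l) : Wk A s j l := ⟨h.1, h.2.1, h.2.2.1⟩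

lemma _root_.DiPath.two_le (h : DiPath A s j l) : 2 ≤ l.length := h.2.2.2.2

lemma _root_.DiPath.nodup (h : DiPath A s j l) : l.Nodup := h.2.2.2.1

/-- Given a suitable witness pair of walks, the edge `(u,v)` is on a confluence ending at `j`. -/
lemma confLabel_of_witness (hac : Acyclic A) (hr : RootedAt A r) {π Wr : List V}
    (huv : A u v) (hπ : Wk A v j π) (huπ : u ∉ π)
    (hWr : Wk A r j Wr) (hdis : ∀ x ∈ π, x ∈ Wr → x = j)
    (hE : (u, v) ∉ Wr.zip Wr.tail) : ConfLabel A (u, v) j := by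
  obtain ⟨P, hP⟩ := wk_of_reflTransGen (hr u)
  have hW : Wk A r j (P ++ π) := hP.cat huv hπ
  set W := P ++ π with hWdef
  have hπnd : π.Nodup := chain'_nodup hac hπ.chain'
  set p := P.length - 1 with hpdef
  have hPpos := hP.length_pos
  have hπpos := hπ.length_pos
  have hWlen : W.length = P.length + π.length := List.length_append
  have hplen : p + 1 < W.length := by omega
  have hWp : W[p]'(by omega) = u := by
    rw [List.getElem_append_left (by omega)]
    exact hP.getLastElem
  have hWp1 : W[p+1]'hplen = v := by
    rw [List.getElem_append_right (by omega)]
    have h0 := hπ.get0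
    convert h0 using 2
    omega
  have hint : ∀ q (h : q < W.length), p < q → q + 1 < W.length → W[q] ∉ Wr := by
    intro q hq hpq hq1 hmem
    have hqP : P.length ≤ q := by omega
    rw [List.getElem_append_right hqP] at hmem
    have hxj := hdis _ (List.getElem_mem _) hmem
    have hlast : π[π.length - 1]'(by omega) = j := hπ.getLastElem
    have := getElem_inj hπnd (by omega) (by omega) (hxj.trans hlast.symm)
    omega
  have hedge : (W[p]'(by omega), W[p+1]'hplen) ∉ Wr.zip Wr.tail := by
    rw [hWp, hWp1]; exact hE
  obtain ⟨a, ha, m, hconf, -⟩ := merge hac hW hWr hplen hint hedge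
  refine ⟨_, _, _, hconf, Or.inl ?_⟩
  have : (W[p]'(by omega), W[p+1]'hplen) ∈ (W.drop a).zip (W.drop a).tail := by
    refine mem_zip_iff.2 ⟨p - a, by rw [List.length_drop]; omega, ?_, ?_⟩
    · rw [List.getElem_drop]; congr 1; omega
    · rw [List.getElem_drop]; congr 1; omega
  rwa [hWp, hWp1] at this

/-- From a confluence through `(u,v)` (on the first branch), extract the witness pair. -/
lemma confLabel_witness_aux (hac : Acyclic A) (hr : RootedAt A r)
    (hC : IsConfluence A s j l₁ l₂) (he : (u, v) ∈ l₁.zip l₁.tail) :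
    ∃ π, Wk A v j π ∧ u ∉ π ∧ ∃ Wr, Wk A r j Wr ∧ (∀ x ∈ π, x ∈ Wr → x = j) ∧
      (u, v) ∉ Wr.zip Wr.tail := by
  obtain ⟨m, hm, hmu, hmv⟩ := mem_zip_iff.1 he
  have h1w : Wk A s j l₁ := hC.1.wk
  have h2w : Wk A s j l₂ := hC.2.1.wk
  have h1nd : l₁.Nodup := hC.1.nodup
  have h2nd : l₂.Nodup := hC.2.1.nodup
  have h1len : 2 ≤ l₁.length := hC.1.two_le
  have h2len : 2 ≤ l₂.length := hC.2.1.two_le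
  have hπ : Wk A v j (l₁.drop (m+1)) := by
    have := h1w.drop (n := m+1) hm
    rwa [hmv] at this
  refine ⟨l₁.drop (m+1), hπ, ?_, ?_⟩
  · intro hu
    obtain ⟨t, ht, hteq⟩ := List.mem_iff_getElem.1 hu
    rw [List.getElem_drop] at hteq
    rw [List.length_drop] at ht
    have := getElem_inj h1nd (by omega) (by omega) (hteq.trans hmu.symm)
    omega
  obtain ⟨Q, hQ⟩ := wk_of_reflTransGen (hr s)
  have hWr : Wk A r j (Q ++ l₂.tail) := hQ.trans h2w
  have hQpos := hQ.length_pos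
  have htlen : l₂.tail.length = l₂.length - 1 := List.length_tail
  -- membership in Q of any l₁-node with positive index gives a cycle
  have hQcyc : ∀ (t : ℕ) (h : t < l₁.length), 0 < t → l₁[t] ∉ Q := by
    intro t h h0 hmem
    have h1 : Relation.TransGen A s (l₁[t]) := h1w.transGen_to_mem h h0
    have h2 : Relation.ReflTransGen A (l₁[t]) s := hQ.reflTransGen_from_mem hmem
    exact hac s (h1.trans_left h2)
  -- s is not in l₂.tail
  have hsnot : s ∉ l₂.tail := by
    intro hmem
    obtain ⟨t, ht, hteq⟩ := List.mem_iff_getElem.1 hmem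
    rw [List.getElem_tail] at hteq
    rw [htlen] at ht
    have h0 : l₂[0]'(by omega) = s := h2w.get0
    have := getElem_inj h2nd (by omega) (by omega) (hteq.trans h0.symm)
    omega
  refine ⟨Q ++ l₂.tail, hWr, ?_, ?_⟩
  · intro x hx hx2
    obtain ⟨t, ht, hteq⟩ := List.mem_iff_getElem.1 hx
    rw [List.getElem_drop] at hteq
    rw [List.length_drop] at ht
    rcases List.mem_append.1 hx2 with hxQ | hxT
    · exact absurd (hteq ▸ hxQ) (hQcyc _ (by omega) (by omega))
    · have hxl2 : x ∈ l₂ := List.mem_of_mem_tail hxT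
      have hxl1 : x ∈ l₁ := hteq ▸ List.getElem_mem _
      rcases hC.2.2.2 x hxl1 hxl2 with rfl | rfl
      · exact absurd hxT hsnot
      · rfl
  · intro hmem
    obtain ⟨i, hi, hiu, hiv⟩ := mem_zip_iff.1 hmem
    have hWrlen : (Q ++ l₂.tail).length = Q.length + l₂.length - 1 := by
      rw [List.length_append, htlen]; omega
    -- v ∈ Wr, derive v = j
    have hvmem : v ∈ Q ++ l₂.tail := hiv ▸ List.getElem_mem _
    have hvj : v = j := by
      rcases List.mem_append.1 hvmem with hvQ | hvT
      · exact absurd hvQ (hmv ▸ hQcyc (m+1) hm (by omega))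
      · have hvl2 : v ∈ l₂ := List.mem_of_mem_tail hvT
        have hvl1 : v ∈ l₁ := hmv ▸ List.getElem_mem _
        rcases hC.2.2.2 v hvl1 hvl2 with rfl | rfl
        · exact absurd hvT hsnot
        · rfl
    -- hence m + 1 = l₁.length - 1
    have hl1j : l₁[l₁.length - 1]'(by omega) = j := h1w.getLastElem
    have hm1 : m + 1 = l₁.length - 1 :=
      getElem_inj h1nd (by omega) (by omega) (by rw [hmv, hl1j, hvj])
    -- Wr is nodup, so i + 1 is the last index
    have hWrnd : (Q ++ l₂.tail).Nodup := chain'_nodup hac hWr.chain'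
    have hWrj : (Q ++ l₂.tail)[(Q ++ l₂.tail).length - 1]'(by rw [hWrlen]; omega) = j :=
      hWr.getLastElem
    have hi1 : i + 1 = (Q ++ l₂.tail).length - 1 :=
      getElem_inj hWrnd (by omega) (by rw [hWrlen]; omega) (by rw [hiv, hWrj, hvj])
    rcases Nat.lt_or_ge 2 l₂.length with h3 | h3
    · -- l₂ long: u is an interior node of l₂, contradiction with disjointness
      have hiQ : Q.length ≤ i := by omega
      rw [List.getElem_append_right hiQ] at hiu
      rw [List.getElem_tail] at hiu
      have hulen : i - Q.length + 1 < l₂.length := by omega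
      have hul2 : u ∈ l₂ := hiu ▸ List.getElem_mem _
      have hul1 : u ∈ l₁ := hmu ▸ List.getElem_mem _
      have hl20 : l₂[0]'(by omega) = s := h2w.get0
      have hl2j : l₂[l₂.length - 1]'(by omega) = j := h2w.getLastElem
      rcases hC.2.2.2 u hul1 hul2 with rfl | rfl
      · have := getElem_inj h2nd (by omega) (by omega) (hiu.trans hl20.symm)
        omega
      · have := getElem_inj h2nd (by omega) (by omega) (hiu.trans hl2j.symm)
        omega
    · -- l₂ = [s, j] : then u = s and l₁ = l₂
      have h2eq : l₂.length = 2 := by omega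
      have hiQ2 : i = Q.length - 1 := by omega
      have hus : u = s := by
        subst hiQ2
        rw [List.getElem_append_left (by omega)] at hiu
        exact hiu.symm.trans hQ.getLastElem
      have hm0 : m = 0 := by
        have hl10 : l₁[0]'(by omega) = s := h1w.get0
        exact getElem_inj h1nd (by omega) (by omega) (by rw [hmu, hus, hl10])
      have hlen12 : l₁.length = 2 := by omega
      apply hC.2.2.1
      refine List.ext_getElem (by omega) ?_
      intro t h₁ h₂
      have h₁' : t < 2 := by omega
      interval_cases t
      · rw [h1w.get0, h2w.get0]
      · have e1 : l₁[1]'(by omega) = j := by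
          have := h1w.getLastElem; rw [← this]; congr 1; omega
        have e2 : l₂[1]'(by omega) = j := by
          have := h2w.getLastElem; rw [← this]; congr 1; omega
        rw [e1, e2]

end Stmt13X

namespace Stmt13X
open List Relation

variable {V : Type*} {A : V → V → Prop} {r u v w j s k k' x : V} {l l₁ l₂ : List V}

lemma chain'_of_getElem {B : V → V → Prop} (h : ∀ i (hi : i + 1 < l.length), B (l[i]'(by omega)) (l[i+1]'hi)) :
    List.Chain' B l :=
  List.isChain_iff_getElem.2 fun i hi => by
    simpa [List.get_eq_getElem] using h i (by omega)

lemma confLabel_witness (hac : Acyclic A) (hr : RootedAt A r)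
    (h : ConfLabel A (u, v) j) :
    ∃ π, Wk A v j π ∧ u ∉ π ∧ ∃ Wr, Wk A r j Wr ∧ (∀ x ∈ π, x ∈ Wr → x = j) ∧
      (u, v) ∉ Wr.zip Wr.tail := by
  obtain ⟨s, l₁, l₂, hC, he | he⟩ := h
  · exact confLabel_witness_aux hac hr hC he
  · exact confLabel_witness_aux hac hr hC.symm he

lemma Wk.single (a : V) : Wk A a a [a] := ⟨List.isChain_singleton a, rfl, rfl⟩

lemma not_self_labeled' (h : ConfLabel A (k, w) k) : False := by
  obtain ⟨s, l₁, l₂, hC, he | he⟩ := h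
  · obtain ⟨m, hm, hmu, _⟩ := mem_zip_iff.1 he
    have hlast : l₁[l₁.length - 1]'(by omega) = k := hC.1.wk.getLastElem
    have := getElem_inj hC.1.nodup (by omega) (by omega) (hmu.trans hlast.symm)
    omega
  · obtain ⟨m, hm, hmu, _⟩ := mem_zip_iff.1 he
    have hlast : l₂[l₂.length - 1]'(by omega) = k := hC.2.1.wk.getLastElem
    have := getElem_inj hC.2.1.nodup (by omega) (by omega) (hmu.trans hlast.symm)
    omega

/-- the last edge of the first branch of a confluence -/
lemma conf_last_edge (hC : IsConfluence A s k l₁ l₂) :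
    ∃ x, A x k ∧ ConfLabel A (x, k) k := by
  have h2 := hC.1.two_le
  have hwk := hC.1.wk
  have hk : l₁[l₁.length - 1]'(by omega) = k := hwk.getLastElem
  refine ⟨l₁[l₁.length - 2]'(by omega), ?_, ?_⟩
  · have h := chain'_rel hwk.chain' (i := l₁.length - 2) (by omega)
    rw [← hk]
    convert h using 2
    omega
  · refine ⟨s, l₁, l₂, hC, Or.inl ?_⟩
    refine mem_zip_iff.2 ⟨l₁.length - 2, by omega, rfl, ?_⟩
    rw [← hk]; congr 1; omega

/-- the labelled relation -/
def Lab (A : V → V → Prop) (k : V) : V → V → Prop :=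
  fun x y => A x y ∧ ConfLabel A (x, y) k

lemma conf_wk_lab (hC : IsConfluence A s k l₁ l₂) : Wk (Lab A k) s k l₁ := by
  refine ⟨chain'_of_getElem fun i hi => ?_, hC.1.2.1, hC.1.2.2.1⟩
  refine ⟨chain'_rel hC.1.1 hi, s, l₁, l₂, hC, Or.inl ?_⟩
  exact mem_zip_iff.2 ⟨i, hi, rfl, rfl⟩

lemma conf_reach_lab (hC : IsConfluence A s k l₁ l₂) (hx : x ∈ l₁) :
    Relation.ReflTransGen (Lab A k) s x :=
  (conf_wk_lab hC).reflTransGen_to_mem hx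

end Stmt13X

namespace Stmt13X
open List Relation

variable {V : Type*} {A : V → V → Prop} {r u v w j s k k' x i : V} {l l₁ l₂ : List V}

lemma in_edges_incl (hac : Acyclic A) (hr : RootedAt A r) (hk : A k i) (hk' : A k' i)
    (h : ConfLabel A (k, i) j) : ConfLabel A (k', i) j := by
  by_cases hkk : k' = k
  · subst hkk; exact h
  obtain ⟨π, hπ, hkπ, Wr, hWr, hdis, hE⟩ := confLabel_witness hac hr h
  have hk'π : k' ∉ π := by
    intro hmem
    have h1 : Relation.ReflTransGen A i k' := hπ.reflTransGen_to_mem hmem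
    exact hac i (Relation.TransGen.trans_right h1 (.single hk'))
  by_cases hij : i = j
  · subst hij
    -- π must be the single node [i]
    have hπ1 : π.length = 1 := by
      by_contra hlen
      have h2 : 2 ≤ π.length := by have := hπ.length_pos; omega
      have h0 : π[0]'(by omega) = i := hπ.get0
      have hl : π[π.length - 1]'(by omega) = i := hπ.getLastElem
      have := getElem_inj (chain'_nodup hac hπ.chain') (by omega) (by omega) (h0.trans hl.symm)
      omega
    obtain ⟨Q, hQ⟩ := wk_of_reflTransGen (hr k)
    have hWr' : Wk A r i (Q ++ [i]) := hQ.cat hk (Wk.single i)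
    refine confLabel_of_witness hac hr hk' hπ hk'π hWr' ?_ ?_
    · intro y hy _
      obtain ⟨t, ht, hteq⟩ := List.mem_iff_getElem.1 hy
      have ht1 : t = 0 := by omega
      subst ht1
      exact hteq ▸ hπ.get0.symm ▸ rfl
    · intro hmem
      obtain ⟨t, ht, htu, htv⟩ := mem_zip_iff.1 hmem
      have hlen : (Q ++ [i]).length = Q.length + 1 := by simp
      have hnd : (Q ++ [i]).Nodup := chain'_nodup hac hWr'.chain'
      have hlastI : (Q ++ [i])[(Q ++ [i]).length - 1]'(by omega) = i := hWr'.getLastElem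
      have ht1 : t + 1 = (Q ++ [i]).length - 1 :=
        getElem_inj hnd (by omega) (by omega) (htv.trans hlastI.symm)
      have htQ : t < Q.length := by omega
      rw [List.getElem_append_left htQ] at htu
      have hQl : Q[Q.length - 1]'(by have := hQ.length_pos; omega) = k := hQ.getLastElem
      have : t = Q.length - 1 := by omega
      subst this
      exact hkk (htu.symm.trans hQl)
  · have hE' : (k', i) ∉ Wr.zip Wr.tail := by
      intro hmem
      have : i ∈ Wr := mem_of_zip_right hmem
      exact hij (hdis i hπ.start_mem this)
    exact confLabel_of_witness hac hr hk' hπ hk'π hWr hdis hE'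

end Stmt13X

namespace Stmt13X
open List Relation

variable {V : Type*} {A : V → V → Prop} {r u v w j s k ρ x : V} {l l₁ l₂ : List V}

/-- Dominators of `k` (relative to the root `r`). -/
def Dom (A : V → V → Prop) (r k : V) : Set V := {d | ∀ l, Wk A r k l → d ∈ l}

lemma conf_transGen (hC : IsConfluence A s k l₁ l₂) : Relation.TransGen A s k := by
  have h2 := hC.1.two_le
  have := hC.1.wk.transGen_to_mem (i := l₁.length - 1) (by omega) (by omega)
  rwa [hC.1.wk.getLastElem] at this

lemma r_ne_k (hac : Acyclic A) (hr : RootedAt A r) (hC : IsConfluence A s k l₁ l₂) :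
    r ≠ k := by
  rintro rfl
  exact hac s ((conf_transGen hC).trans_left (hr s))

lemma s_ne_k (hac : Acyclic A) (hC : IsConfluence A s k l₁ l₂) : s ≠ k := by
  rintro rfl
  exact hac _ (conf_transGen hC)

lemma exists_rho (hac : Acyclic A) (hr : RootedAt A r) (hC : IsConfluence A s k l₁ l₂) :
    ∃ ρ, ρ ∈ Dom A r k ∧ ρ ≠ k ∧ ∀ d ∈ Dom A r k, d ≠ k → Relation.ReflTransGen A d ρ := by
  classical
  have hrk : r ≠ k := r_ne_k hac hr hC
  obtain ⟨P₀, hP₀⟩ := wk_of_reflTransGen (hr k)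
  have hpos := hP₀.length_pos
  set P : ℕ → Prop := fun q => ∃ h : q < P₀.length, P₀[q] ∈ Dom A r k ∧ P₀[q] ≠ k with hPdef
  have hP0 : P 0 := ⟨hpos, by rw [hP₀.get0]; exact ⟨fun l hl => hl.start_mem, hrk⟩⟩
  set N := P₀.length - 1 with hNdef
  set a := Nat.findGreatest P N with hadef
  have haP : P a := Nat.findGreatest_spec (Nat.zero_le N) hP0
  obtain ⟨ha, haD, haK⟩ := haP
  refine ⟨P₀[a], haD, haK, ?_⟩
  intro d hd hdk
  obtain ⟨t, ht, hteq⟩ := List.mem_iff_getElem.1 (hd P₀ hP₀)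
  have htN : t ≤ N := by omega
  have hta : t ≤ a := by
    by_contra hgt
    exact (Nat.findGreatest_is_greatest (P := P) (by omega) htN)
      ⟨ht, by rw [hteq]; exact hd, by rw [hteq]; exact hdk⟩
  exact hteq ▸ chain'_reflTransGen hP₀.chain' hta ha

lemma rho_start_path (hac : Acyclic A) (hr : RootedAt A r)
    (hρD : ρ ∈ Dom A r k) (hρk : ρ ≠ k) (hC : IsConfluence A s k l₁ l₂) :
    ∃ R, Wk A ρ s R := by
  obtain ⟨Q, hQ⟩ := wk_of_reflTransGen (hr s)
  have hW1 : Wk A r k (Q ++ l₁.tail) := hQ.trans hC.1.wk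
  have hW2 : Wk A r k (Q ++ l₂.tail) := hQ.trans hC.2.1.wk
  have h1 := hρD _ hW1
  have h2 := hρD _ hW2
  rcases List.mem_append.1 h1 with hQ1 | hT1
  · obtain ⟨t, ht, hteq⟩ := List.mem_iff_getElem.1 hQ1
    exact ⟨Q.drop t, hteq ▸ hQ.drop ht⟩
  rcases List.mem_append.1 h2 with hQ2 | hT2
  · obtain ⟨t, ht, hteq⟩ := List.mem_iff_getElem.1 hQ2
    exact ⟨Q.drop t, hteq ▸ hQ.drop ht⟩
  rcases hC.2.2.2 ρ (List.mem_of_mem_tail hT1) (List.mem_of_mem_tail hT2) with rfl | rfl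
  · exact ⟨[ρ], Wk.single ρ⟩
  · exact absurd rfl hρk

lemma Wk.congr_snd {a b b' : V} (h : Wk A a b l) (hb : b = b') : Wk A a b' l := hb ▸ h

lemma rho_reach (hac : Acyclic A) (hr : RootedAt A r)
    (hρD : ρ ∈ Dom A r k) (hρk : ρ ≠ k)
    (hρmax : ∀ d ∈ Dom A r k, d ≠ k → Relation.ReflTransGen A d ρ) :
    ∀ n : ℕ, ∀ s l₁ l₂ R, IsConfluence A s k l₁ l₂ → Wk A ρ s R → R.length = n →
      Relation.ReflTransGen (Lab A k) ρ s := by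
  intro n
  induction n using Nat.strong_induction_on with
  | _ n IH =>
  intro s l₁ l₂ R hC hR hRlen
  rcases Nat.lt_or_ge n 2 with hn | hn
  · have h1 : R.length = 1 := by have := hR.length_pos; omega
    have : ρ = s := hR.eq_of_singleton h1
    exact this ▸ Relation.ReflTransGen.refl
  have hRnd := chain'_nodup hac hR.chain'
  have hsk : s ≠ k := s_ne_k hac hC
  have hρs : ρ ≠ s := by
    intro he
    have h2 : Relation.TransGen A ρ s := by
      have := hR.transGen_to_mem (i := R.length - 1) (by omega) (by omega)
      rwa [hR.getLastElem] at this
    exact hac s (he ▸ h2)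
  have hsD : s ∉ Dom A r k := by
    intro hs
    have h1 : Relation.ReflTransGen A s ρ := hρmax s hs hsk
    have h2 : Relation.TransGen A ρ s := by
      have := hR.transGen_to_mem (i := R.length - 1) (by omega) (by omega)
      rwa [hR.getLastElem] at this
    exact hac s (Relation.TransGen.trans_right h1 h2)
  have hex : ∃ W, Wk A r k W ∧ s ∉ W := by
    by_contra hcon
    push_neg at hcon
    exact hsD fun l hl => hcon l hl
  obtain ⟨W, hW, hsW⟩ := hex
  classical
  have hWpos := hW.length_pos
  have hPZex : ∃ q, ∃ h : q < W.length, W[q] ∈ l₁ ∨ W[q] ∈ l₂ :=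
    ⟨W.length - 1, by omega, Or.inl (by rw [hW.getLastElem]; exact hC.1.wk.end_mem)⟩
  set z := Nat.find hPZex with hzdef
  obtain ⟨hz, hzmem⟩ := Nat.find_spec hPZex
  have hzmin : ∀ q, q < z → ∀ h : q < W.length, W[q] ∉ l₁ ∧ W[q] ∉ l₂ := by
    intro q hq h
    have := Nat.find_min hPZex hq
    push_neg at this
    obtain ⟨h1, h2⟩ := not_or.1 (by
      intro hcon
      exact (Nat.find_min hPZex hq) ⟨h, hcon⟩)
    exact ⟨h1, h2⟩
  suffices haux : ∀ m₁ m₂, IsConfluence A s k m₁ m₂ → W[z] ∈ m₁ →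
      (∀ q, q < z → ∀ h : q < W.length, W[q] ∉ m₁ ∧ W[q] ∉ m₂) →
      Relation.ReflTransGen (Lab A k) ρ s by
    rcases hzmem with h1 | h1
    · exact haux l₁ l₂ hC h1 hzmin
    · exact haux l₂ l₁ hC.symm h1 fun q hq h => ⟨(hzmin q hq h).2, (hzmin q hq h).1⟩
  clear hzmem hzmin hC
  intro l₁ l₂ hC hz1 hzmin
  -- build W̃ = W.take (z+1) ++ l₁.drop (c+1)
  obtain ⟨c, hc, hceq⟩ := List.mem_iff_getElem.1 hz1
  have htake : Wk A r (W[z]) (W.take (z+1)) := hW.take hz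
  have hWt : Wk A r k (W.take (z+1) ++ (l₁.drop c).tail) := htake.trans (hceq ▸ hC.1.wk.drop hc)
  rw [List.tail_drop] at hWt
  set Wt := W.take (z+1) ++ l₁.drop (c+1) with hWtdef
  have hl1len := hC.1.two_le
  have hl2len := hC.2.1.two_le
  have hl1nd := hC.1.nodup
  have hl2nd := hC.2.1.nodup
  have hsWt : s ∉ Wt := by
    intro hmem
    rcases List.mem_append.1 hmem with h1 | h2
    · exact hsW (List.mem_of_mem_take h1)
    · obtain ⟨t, ht, hteq⟩ := List.mem_iff_getElem.1 h2
      rw [List.getElem_drop] at hteq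
      rw [List.length_drop] at ht
      have h0 : l₁[0]'(by omega) = s := hC.1.wk.get0
      have := getElem_inj hl1nd (by omega) (by omega) (hteq.trans h0.symm)
      omega
  have hint2 : ∀ (q : ℕ) (h : q + 1 < l₂.length), 0 < q → l₂[q]'(by omega) ∉ Wt := by
    intro q hql h0 hmem
    have hq2 : l₂[q]'(by omega) ∈ l₂ := List.getElem_mem _
    rcases List.mem_append.1 hmem with h1 | h2
    · obtain ⟨t, ht, hteq⟩ := List.mem_iff_getElem.1 h1
      rw [List.getElem_take] at hteq
      have htz : t ≤ z := by rw [List.length_take] at ht; omega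
      rcases Nat.lt_or_ge t z with hlt | hge
      · exact (hzmin t hlt (by omega)).2 (hteq ▸ hq2)
      · have htz' : t = z := by omega
        have hteq' : W[z]'hz = l₂[q]'(by omega) := by
          rw [← hteq]; congr 1; omega
        have hinl2 : W[z]'hz ∈ l₂ := hteq' ▸ hq2
        rcases hC.2.2.2 _ hz1 hinl2 with h | h
        · exact hsW (h ▸ List.getElem_mem _)
        · have hk2 : l₂[l₂.length-1]'(by omega) = k := hC.2.1.wk.getLastElem
          have := getElem_inj hl2nd (by omega) (by omega) ((hteq'.symm.trans h).trans hk2.symm)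
          omega
    · have hinl1 : l₂[q]'(by omega) ∈ l₁ := List.mem_of_mem_drop h2
      rcases hC.2.2.2 _ hinl1 hq2 with h | h
      · have h0' : l₂[0]'(by omega) = s := hC.2.1.wk.get0
        have := getElem_inj hl2nd (by omega) (by omega) (h.trans h0'.symm)
        omega
      · have hk2 : l₂[l₂.length-1]'(by omega) = k := hC.2.1.wk.getLastElem
        have := getElem_inj hl2nd (by omega) (by omega) (h.trans hk2.symm)
        omega
  -- the long walk W₁ through ρ and s and l₂
  obtain ⟨Q₀, hQ₀⟩ := wk_of_reflTransGen (hr ρ)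
  have hQ0pos := hQ₀.length_pos
  have hQR : Wk A r s (Q₀ ++ R.tail) := hQ₀.trans hR
  have hW1 : Wk A r k ((Q₀ ++ R.tail) ++ l₂.tail) := hQR.trans hC.2.1.wk
  set QR := Q₀ ++ R.tail with hQRdef
  set W₁ := QR ++ l₂.tail with hW1def
  have hQRlen : QR.length = Q₀.length + n - 1 := by
    rw [hQRdef, List.length_append, List.length_tail, hRlen]; omega
  have hW1len : W₁.length = QR.length + l₂.length - 1 := by
    rw [hW1def, List.length_append, List.length_tail]; omega
  set p := QR.length - 2 with hpdef
  have hp1 : p + 1 < W₁.length := by omega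
  have hQRs : QR[QR.length - 1]'(by omega) = s := hQR.getLastElem
  have hW1p1 : W₁[p+1]'hp1 = s := by
    simp only [hW1def]
    rw [List.getElem_append_left (by omega)]
    rw [← hQRs]; congr 1; omega
  have hint : ∀ q (h : q < W₁.length), p < q → q + 1 < W₁.length → W₁[q] ∉ Wt := by
    intro q hq hpq hq1
    rcases Nat.lt_or_ge q QR.length with hlt | hge
    · have hq' : q = p + 1 := by omega
      subst hq'
      rw [hW1p1]
      exact hsWt
    · simp only [hW1def]
      rw [List.getElem_append_right hge, List.getElem_tail]
      exact hint2 (q - QR.length + 1) (by omega) (by omega)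
  have hedge : (W₁[p]'(by omega), W₁[p+1]'hp1) ∉ Wt.zip Wt.tail := by
    intro hmem
    have := mem_of_zip_right hmem
    rw [hW1p1] at this
    exact hsWt this
  obtain ⟨a, ha, m2, hconf, hmax⟩ := merge hac hW1 hWt hp1 hint hedge
  have hiρlt : Q₀.length - 1 < W₁.length := by omega
  have hiρ : W₁[Q₀.length - 1]'hiρlt = ρ := by
    simp only [hW1def, hQRdef]
    rw [List.getElem_append_left (by rw [List.length_append]; omega :
      Q₀.length - 1 < (Q₀ ++ R.tail).length)]
    rw [List.getElem_append_left (by omega : Q₀.length - 1 < Q₀.length)]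
    exact hQ₀.getLastElem
  have hρWt : ρ ∈ Wt := hρD Wt hWt
  have hiρa : Q₀.length - 1 ≤ a := hmax _ (by omega) (by omega) (by rw [hiρ]; exact hρWt)
  have haW1 : a < W₁.length := by omega
  set d := Q₀.length - 1 with hddef
  have hRdrop : Wk A ρ (W₁[a]) ((W₁.drop d).take (a - d + 1)) := by
    have h1 : Wk A ρ k (W₁.drop d) := hiρ ▸ hW1.drop hiρlt
    have h2 := h1.take (n := a - d) (by rw [List.length_drop]; omega)
    refine h2.congr_snd ?_
    rw [List.getElem_drop]; congr 1; omega
  have hlenR' : ((W₁.drop d).take (a - d + 1)).length = a - d + 1 := by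
    rw [List.length_take, List.length_drop]; omega
  have hlt : a - d + 1 < n := by omega
  have hIH : Relation.ReflTransGen (Lab A k) ρ (W₁[a]) :=
    IH _ hlt _ _ _ _ hconf hRdrop hlenR'
  have hsin : s ∈ W₁.drop a := by
    refine List.mem_iff_getElem.2 ⟨p + 1 - a, by rw [List.length_drop]; omega, ?_⟩
    rw [List.getElem_drop, ← hW1p1]; congr 1; omega
  exact hIH.trans (conf_reach_lab hconf hsin)

end Stmt13X


/-- The confluence edge label assignment of a rooted extraction order is a
decomposable edge label assignment. -/
theorem stmt13 {V : Type*} (A : V → V → Prop) (r : V) (hac : Acyclic A)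
    (hr : RootedAt A r) :
    DecomposableLabels A (ConfSet A) := by
  classical
  refine ⟨fun e j h => h, ?_, ?_, ?_, ?_⟩
  · -- rooted_label_subgraph
    intro k hk
    obtain ⟨v0, w0, hA0, hL0⟩ := hk
    obtain ⟨s₀, m₁, m₂, hC₀, -⟩ := hL0
    obtain ⟨ρ, hρD, hρk, hρmax⟩ := Stmt13X.exists_rho hac hr hC₀
    have reachS : ∀ s l₁ l₂, IsConfluence A s k l₁ l₂ →
        Relation.ReflTransGen (Stmt13X.Lab A k) ρ s := by
      intro s l₁ l₂ hC
      obtain ⟨R, hR⟩ := Stmt13X.rho_start_path hac hr hρD hρk hC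
      exact Stmt13X.rho_reach hac hr hρD hρk hρmax R.length s l₁ l₂ R hC hR rfl
    have hmemN : ∀ s l₁ l₂, IsConfluence A s k l₁ l₂ → ∀ x ∈ l₁,
        Relation.ReflTransGen (Stmt13X.Lab A k) ρ x := by
      intro s l₁ l₂ hC x hx
      exact (reachS s l₁ l₂ hC).trans (Stmt13X.conf_reach_lab hC hx)
    have hρN : ρ ∈ LabelNodes A (ConfSet A) k := by
      rcases (reachS _ _ _ hC₀).cases_head with heq | ⟨y, hy, -⟩
      · have hwkl := Stmt13X.conf_wk_lab hC₀
        have h2 := hC₀.1.two_le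
        have hrel := Stmt13X.chain'_rel hwkl.chain' (i := 0) (by omega)
        rw [hwkl.get0] at hrel
        exact heq ▸ ⟨m₁[1]'(by omega), Or.inl hrel⟩
      · exact ⟨y, Or.inl hy⟩
    refine ⟨ρ, hρN, ?_⟩
    intro v hv
    obtain ⟨w', hw'⟩ := hv
    have key : ∀ u' v' : V, ConfLabel A (u', v') k → v = u' ∨ v = v' →
        Relation.ReflTransGen (Stmt13X.Lab A k) ρ v := by
      rintro u' v' ⟨s, l₁, l₂, hC, he | he⟩ hvv
      · rcases hvv with rfl | rfl
        · exact hmemN s l₁ l₂ hC _ (Stmt13X.mem_of_zip_left he)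
        · exact hmemN s l₁ l₂ hC _ (Stmt13X.mem_of_zip_right he)
      · rcases hvv with rfl | rfl
        · exact hmemN s l₂ l₁ hC.symm _ (Stmt13X.mem_of_zip_left he)
        · exact hmemN s l₂ l₁ hC.symm _ (Stmt13X.mem_of_zip_right he)
    rcases hw' with ⟨hA', hL'⟩ | ⟨hA', hL'⟩
    · exact key v w' hL' (Or.inl rfl)
    · exact key w' v hL' (Or.inr rfl)
  · -- mem_own_subgraph
    intro k hk
    obtain ⟨v, w, hA, hL⟩ := hk
    obtain ⟨s, l₁, l₂, hC, -⟩ := hL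
    obtain ⟨x, hAx, hlab⟩ := Stmt13X.conf_last_edge hC
    exact ⟨x, Or.inr ⟨hAx, hlab⟩⟩
  · -- in_edges_eq
    intro i k k' hk hk'
    exact Set.ext fun j => ⟨Stmt13X.in_edges_incl hac hr hk hk',
      Stmt13X.in_edges_incl hac hr hk' hk⟩
  · -- not_self_labeled
    intro k w _ h
    exact Stmt13X.not_self_labeled' h
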